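/- For every n ≥ 1, S_n↑ := {x↑ : x ∈ S_n} equals {0,1}ⁿ \ {0}; in particular |S_n↑| = 2ⁿ − 1. -/
import Mathlib


/-- `x` is an integer point. -/
def isInt {n : ℕ} (x : Fin n → ℝ) : Prop := ∀ i, ∃ z : ℤ, x i = (z : ℝ)

/-- `w = x↑` for `x ∈ K = ℝⁿ₊`: if `x ∈ ℤⁿ` then `w = x`; otherwise, with `k` the
smallest index such that `x_k ∉ ℤ`, `wᵢ = xᵢ` for `i < k`, `w_k = ⌈x_k⌉`, and `wᵢ = 0`
for `i > k`. -/
def stdUp {n : ℕ} (x w : Fin n → ℝ) : Prop :=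
  (isInt x ∧ w = x) ∨
  ∃ k : Fin n, (¬ ∃ z : ℤ, x k = (z : ℝ)) ∧
    (∀ j : Fin n, j < k → ∃ z : ℤ, x j = (z : ℝ)) ∧
    (∀ i : Fin n, i < k → w i = x i) ∧ w k = (⌈x k⌉ : ℝ) ∧
    (∀ i : Fin n, k < i → w i = 0)

/-- `S_n = {x ∈ [0,1]ⁿ : ‖x - 𝟙/2‖² ≤ n/4 - 3/16}`. -/
def Sn (n : ℕ) : Set (Fin n → ℝ) :=
  {x | (∀ i, x i ∈ Set.Icc (0 : ℝ) 1) ∧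
    ∑ i, (x i - 1/2) ^ 2 ≤ (n : ℝ)/4 - 3/16}

/-- `S_n↑ = {x↑ : x ∈ S_n}`. -/
def SnUp (n : ℕ) : Set (Fin n → ℝ) := {w | ∃ x ∈ Sn n, stdUp x w}

lemma int01 (y : ℝ) (h0 : 0 ≤ y) (h1 : y ≤ 1) (hz : ∃ z : ℤ, y = (z : ℝ)) :
    y = 0 ∨ y = 1 := by
  obtain ⟨z, rfl⟩ := hz
  have hz0 : (0:ℤ) ≤ z := by exact_mod_cast h0
  have hz1 : z ≤ 1 := by exact_mod_cast h1
  interval_cases z <;> simp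

lemma half_not_int : ¬ ∃ z : ℤ, (1/2 : ℝ) = (z : ℝ) := by
  rintro ⟨z, hz⟩
  have : ((2*z : ℤ) : ℝ) = ((1:ℤ) : ℝ) := by push_cast; linarith
  have : (2*z : ℤ) = 1 := by exact_mod_cast this
  omega

lemma card_part (n : ℕ) :
    ({w : Fin n → ℝ | (∀ i, w i = 0 ∨ w i = 1) ∧ w ≠ 0}).ncard = 2 ^ n - 1 := by
  classical
  set f : (Fin n → Bool) → (Fin n → ℝ) := fun b i => if b i then 1 else 0 with hf
  have hinj : Function.Injective f := by
    intro a b h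
    funext i
    have := congrFun h i
    by_cases ha : a i <;> by_cases hb : b i <;> simp [hf, ha, hb] at this ⊢
  have himg : {w : Fin n → ℝ | (∀ i, w i = 0 ∨ w i = 1) ∧ w ≠ 0}
      = f '' ({fun _ => false}ᶜ) := by
    ext w
    constructor
    · rintro ⟨h01, hne⟩
      refine ⟨fun i => if w i = 1 then true else false, ?_, ?_⟩
      · simp only [Set.mem_compl_iff, Set.mem_singleton_iff]
        intro hb
        apply hne
        funext i
        have := congrFun hb i
        rcases h01 i with h | h
        · simpa [h] using h
        · simp [h] at this
      · funext i
        rcases h01 i with h | h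
        · simp [hf, h]
        · simp [hf, h]
    · rintro ⟨b, hb, rfl⟩
      simp only [Set.mem_compl_iff, Set.mem_singleton_iff] at hb
      constructor
      · intro i; by_cases h : b i <;> simp [hf, h]
      · intro h0
        apply hb
        funext i
        have := congrFun h0 i
        by_cases h : b i <;> simp [hf, h] at this ⊢
  rw [himg, Set.ncard_image_of_injective _ hinj]
  have : ({fun _ => false}ᶜ : Set (Fin n → Bool)) = Set.univ \ {fun _ => false} := by
    simp [Set.compl_eq_univ_diff]
  rw [this, Set.ncard_diff_singleton_of_mem (Set.mem_univ _)]
  simp [Set.ncard_univ, Nat.card_eq_fintype_card]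

/-- For every `n ≥ 1`, `S_n↑ = {0,1}ⁿ \ {0}`; in particular `|S_n↑| = 2ⁿ - 1`. -/
theorem stmt18 (n : ℕ) (hn : 1 ≤ n) :
    SnUp n = {w : Fin n → ℝ | (∀ i, w i = 0 ∨ w i = 1) ∧ w ≠ 0} ∧
    (SnUp n).ncard = 2 ^ n - 1 := by
  classical
  have hset : SnUp n = {w : Fin n → ℝ | (∀ i, w i = 0 ∨ w i = 1) ∧ w ≠ 0} := by
    ext w
    constructor
    · rintro ⟨x, ⟨hbox, hsum⟩, hup⟩
      rcases hup with ⟨hint, heq⟩ | ⟨k, hk, _hj, hlt, hkk, hgt⟩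
      · -- impossible: integer points of the cube are not in Sn
        exfalso
        have hterm : ∀ i, (x i - 1/2) ^ 2 = 1/4 := by
          intro i
          rcases int01 (x i) (hbox i).1 (hbox i).2 (hint i) with h | h <;>
            rw [h] <;> norm_num
        have : ∑ i, (x i - 1/2) ^ 2 = (n : ℝ)/4 := by
          rw [Finset.sum_congr rfl (fun i _ => hterm i)]
          simp [Finset.sum_const]
          ring
        rw [this] at hsum
        linarith
      · have hk1 : w k = 1 := by
          rw [hkk]
          have h0 : 0 < x k := by
            rcases lt_or_eq_of_le (hbox k).1 with h | h
            · exact h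
            · exact absurd ⟨0, by simp [← h]⟩ hk
          have h1 : x k ≤ 1 := (hbox k).2
          have : ⌈x k⌉ = 1 := by
            rw [Int.ceil_eq_iff]
            constructor <;> push_cast <;> linarith
          rw [this]; norm_num
        refine ⟨fun i => ?_, ?_⟩
        · rcases lt_trichotomy i k with h | h | h
          · have := hlt i h
            rw [this]
            exact int01 (x i) (hbox i).1 (hbox i).2 (_hj i h)
          · right; rw [h]; exact hk1
          · left; exact hgt i h
        · intro h0
          have := congrFun h0 k
          rw [hk1] at this
          norm_num at this
    · rintro ⟨h01, hne⟩
      -- k = largest index with w k = 1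
      have hex : ∃ i, w i = 1 := by
        by_contra h
        push_neg at h
        apply hne
        funext i
        rcases h01 i with h' | h'
        · exact h'
        · exact absurd h' (h i)
      set s : Finset (Fin n) := Finset.univ.filter (fun i => w i = 1) with hs
      have hsne : s.Nonempty := by
        obtain ⟨i, hi⟩ := hex
        exact ⟨i, by simp [hs, hi]⟩
      set k := s.max' hsne with hkdef
      have hwk : w k = 1 := by
        have := s.max'_mem hsne
        simp [hs] at this
        exact this
      have hbig : ∀ i, k < i → w i = 0 := by
        intro i hi
        rcases h01 i with h | h
        · exact h
        · exact absurd (s.le_max' i (by simp [hs, h])) (not_le.mpr hi)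
      set x : Fin n → ℝ := fun i => if i < k then w i else if i = k then 1/2 else 0 with hx
      have hx01 : ∀ i, x i ∈ Set.Icc (0:ℝ) 1 := by
        intro i
        rcases lt_trichotomy i k with h | h | h
        · rcases h01 i with h' | h' <;> simp [hx, h, h'] <;> norm_num
        · simp [hx, h]; norm_num
        · simp [hx, not_lt.mpr (le_of_lt h), Fin.ne_of_gt h]
      have hterm : ∀ i, (x i - 1/2) ^ 2 ≤ 1/4 := by
        intro i
        have h0 := (hx01 i).1
        have h1 := (hx01 i).2
        nlinarith
      have htk : (x k - 1/2) ^ 2 = 0 := by simp [hx]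
      refine ⟨x, ⟨hx01, ?_⟩, ?_⟩
      · have : ∑ i, (x i - 1/2) ^ 2
            = (x k - 1/2)^2 + ∑ i ∈ Finset.univ.erase k, (x i - 1/2) ^ 2 :=
          (Finset.add_sum_erase _ _ (Finset.mem_univ k)).symm
        rw [this, htk, zero_add]
        have hb : ∑ i ∈ Finset.univ.erase k, (x i - 1/2) ^ 2
            ≤ (Finset.univ.erase k).card • (1/4 : ℝ) :=
          Finset.sum_le_card_nsmul _ _ _ (fun i _ => hterm i)
        have hc : (Finset.univ.erase k).card = n - 1 := by
          rw [Finset.card_erase_of_mem (Finset.mem_univ k)]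
          simp
        rw [hc] at hb
        have : ((n - 1 : ℕ) : ℝ) = (n : ℝ) - 1 := by
          have : (1:ℕ) ≤ n := hn
          push_cast [Nat.cast_sub this]
          ring
        rw [nsmul_eq_mul, this] at hb
        linarith
      · right
        refine ⟨k, ?_, ?_, ?_, ?_, ?_⟩
        · simpa [hx] using half_not_int
        · intro j hj
          rcases h01 j with h | h
          · exact ⟨0, by simp [hx, hj, h]⟩
          · exact ⟨1, by simp [hx, hj, h]⟩
        · intro i hi; simp [hx, hi]
        · have hxk : x k = 1/2 := by simp [hx]
          have hc : ⌈x k⌉ = 1 := by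
            rw [Int.ceil_eq_iff, hxk]; constructor <;> norm_num
          rw [hwk, hc]; norm_num
        · intro i hi
          rw [hbig i hi]
  exact ⟨hset, by rw [hset]; exact card_part n⟩
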